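/- There is no Pell number with the Lehmer property; that is, there is no n such that P_n is composite and φ(P_n) divides P_n - 1. -/

import Mathlib

def pellP : ℕ → ℕ
  | 0 => 0
  | 1 => 1
  | n + 2 => 2 * pellP (n + 1) + pellP n

def pellQ : ℕ → ℕ
  | 0 => 2
  | 1 => 2
  | n + 2 => 2 * pellQ (n + 1) + pellQ n

lemma pellP_rec (n : ℕ) : pellP (n+2) = 2 * pellP (n+1) + pellP n := by rw [pellP]

lemma pellQ_rec (n : ℕ) : pellQ (n+2) = 2 * pellQ (n+1) + pellQ n := by rw [pellQ]

lemma two_step (P : ℕ → Prop) (h0 : P 0) (h1 : P 1)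
    (ih : ∀ n, P n → P (n+1) → P (n+2)) (n : ℕ) : P n := by
  have : P n ∧ P (n+1) := by
    induction n with
    | zero => exact ⟨h0, h1⟩
    | succ k h => exact ⟨h.2, ih k h.1 h.2⟩
  exact this.1

lemma pellP_add (m n : ℕ) :
    pellP (m + n + 1) = pellP (m+1) * pellP (n+1) + pellP m * pellP n := by
  induction n using two_step generalizing m with
  | h0 => simp [pellP]
  | h1 =>
      rw [show m + 1 + 1 = m + 2 from rfl, pellP_rec m,
        show pellP 2 = 2 from rfl, show pellP 1 = 1 from rfl]
      ring
  | ih n ih1 ih2 =>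
      have e1 := ih1 m
      have e2 := ih2 m
      rw [show m + (n + 2) + 1 = (m + n + 1) + 2 from rfl, pellP_rec (m+n+1),
        show m + n + 1 + 1 = m + (n+1) + 1 from rfl, e1, e2,
        show n + 2 + 1 = (n+1) + 2 from rfl, pellP_rec (n+1), pellP_rec n]
      ring

lemma pellQ_eq (k : ℕ) : pellQ (k+1) = pellP (k+2) + pellP k := by
  induction k using two_step with
  | h0 => rfl
  | h1 => rfl
  | ih n ih1 ih2 =>
      rw [show n + 2 + 1 = (n+1) + 2 from rfl, pellQ_rec (n+1), ih1, ih2,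
        show n + 2 + 2 = (n+2) + 2 from rfl, pellP_rec (n+2),
        show n + 2 + 1 = (n+1) + 2 from rfl, pellP_rec (n+1), pellP_rec n]
      ring

lemma pellP_parity (n : ℕ) : pellP n % 2 = n % 2 := by
  induction n using two_step with
  | h0 => rfl
  | h1 => rfl
  | ih n ih1 ih2 => rw [pellP_rec]; omega

lemma pellP_coprime (n : ℕ) : Nat.Coprime (pellP n) (pellP (n+1)) := by
  induction n with
  | zero => simp [pellP, Nat.Coprime]
  | succ k ih =>
      rw [show k + 1 + 1 = k + 2 from rfl, pellP_rec, Nat.Coprime, Nat.gcd_comm, mul_comm]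
      simpa [Nat.Coprime, Nat.gcd_comm] using ih

lemma pellP_growth (n : ℕ) : 2 ^ n ≤ pellP (n+1) := by
  induction n using two_step with
  | h0 => simp [pellP]
  | h1 => rw [show pellP 2 = 2 from rfl]; norm_num
  | ih n ih1 ih2 =>
      rw [show n + 2 + 1 = (n+1) + 2 from rfl, pellP_rec (n+1), pow_succ]
      calc 2^(n+1) * 2 ≤ pellP (n+1+1) * 2 := by nlinarith
        _ ≤ 2 * pellP (n+1+1) + pellP (n+1) := by omega

lemma pellQ_mod4 (n : ℕ) : pellQ n % 4 = 2 := by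
  induction n using two_step with
  | h0 => rfl
  | h1 => rfl
  | ih n ih1 ih2 => rw [pellQ_rec]; omega

lemma pell_cassini_int (m : ℕ) :
    (pellP m : ℤ) * pellP (m+2) - (pellP (m+1))^2 = (-1)^(m+1) := by
  induction m with
  | zero => simp [pellP]
  | succ k ih =>
      rw [show k + 1 + 2 = (k+1) + 2 from rfl, pellP_rec (k+1)]
      push_cast
      push_cast at ih
      rw [show k + 1 + 1 = k + 2 from rfl] at *
      rw [pellP_rec k] at *
      push_cast at *
      linear_combination -ih

lemma cassini_even (j : ℕ) :
    pellP (2*j) * pellP (2*j+2) + 1 = pellP (2*j+1)^2 := by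
  have h := pell_cassini_int (2*j)
  rw [show 2*j+1+1 = 2*j+2 from rfl] at h
  have hs : ((-1:ℤ))^(2*j+1) = -1 := by
    rw [pow_succ, pow_mul]; norm_num
  rw [hs] at h
  have : (pellP (2*j) : ℤ) * pellP (2*j+2) + 1 = (pellP (2*j+1):ℤ)^2 := by linarith
  exact_mod_cast this

lemma pellP_sq_add_sq (k : ℕ) : pellP (2*k+1) = pellP k ^ 2 + pellP (k+1) ^ 2 := by
  have := pellP_add k k
  rw [show k + k + 1 = 2*k+1 from by ring] at this
  rw [this]; ring

lemma pellP_double (m : ℕ) : pellP (2*(m+1)) = pellP (m+1) * pellQ (m+1) := by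
  have := pellP_add m (m+1)
  rw [show m + (m+1) + 1 = 2*(m+1) from by ring] at this
  rw [this, pellQ_eq]
  ring

-- N - 1 factorizations for odd index
lemma pell_sub_one_even (j : ℕ) :
    pellP (2*j) * pellQ (2*j+1) + 1 = pellP (2*(2*j)+1) := by
  rw [pellQ_eq (2*j), pellP_sq_add_sq (2*j), ← cassini_even j]
  ring

lemma pell_sub_one_odd (j : ℕ) :
    pellP (2*j+2) * pellQ (2*j+1) + 1 = pellP (2*(2*j+1)+1) := by
  rw [pellQ_eq (2*j), pellP_sq_add_sq (2*j+1),
    show 2*j+1+1 = 2*j+2 from rfl, ← cassini_even j]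
  ring

lemma pellQ_two_mul_odd (n : ℕ) : ∃ c, pellQ n = 2 * c ∧ c % 2 = 1 := by
  have h := pellQ_mod4 n
  exact ⟨pellQ n / 2, by omega, by omega⟩

-- 2-adic valuation: 2^t ∣ pellP a → 2^t ∣ a
lemma pow_two_dvd_pell : ∀ t a : ℕ, 0 < a → 2^t ∣ pellP a → 2^t ∣ a := by
  intro t
  induction t with
  | zero => simp
  | succ s ih =>
      intro a ha hdvd
      have heven : pellP a % 2 = 0 := by
        have h2 : (2:ℕ) ∣ pellP a := dvd_trans (dvd_pow_self 2 (Nat.succ_ne_zero s)) hdvd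
        omega
      have haeven : a % 2 = 0 := by have := pellP_parity a; omega
      obtain ⟨b, rfl⟩ : ∃ b, a = 2 * (b + 1) := ⟨a / 2 - 1, by omega⟩
      rw [pellP_double b] at hdvd
      obtain ⟨c, hc, hcodd⟩ := pellQ_two_mul_odd (b+1)
      rw [hc] at hdvd
      have h2 : 2^s ∣ pellP (b+1) * c := by
        rcases hdvd with ⟨d, hd⟩
        refine ⟨d, Nat.eq_of_mul_eq_mul_left (show 0 < 2 by norm_num) ?_⟩
        have e : pellP (b+1) * (2*c) = 2 * (pellP (b+1) * c) := by ring
        have e2 : 2^(s+1) * d = 2 * (2^s * d) := by ring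
        rw [e, e2] at hd
        exact hd
      have hcop : Nat.Coprime (2^s) c :=
        Nat.Coprime.pow_left s ((Nat.Prime.coprime_iff_not_dvd Nat.prime_two).mpr (by omega))
      have hPb : 2^s ∣ pellP (b+1) := hcop.dvd_of_dvd_mul_right h2
      have := ih (b+1) (Nat.succ_pos b) hPb
      rcases this with ⟨e, he⟩
      exact ⟨e, by rw [pow_succ, he]; ring⟩

-- generic facts
lemma prod_sub_one_le {T : Finset ℕ} (hne : T.Nonempty) (h2' : ∀ p ∈ T, 2 ≤ p) :
    (∏ p ∈ T, (p-1)) + 1 ≤ ∏ p ∈ T, p := by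
  revert h2'
  induction hne using Finset.Nonempty.cons_induction with
  | singleton a =>
      intro h2
      have := h2 a (by simp)
      simp; omega
  | cons a T ha hT ih =>
      intro h2
      rw [Finset.prod_cons, Finset.prod_cons]
      have h2a : 2 ≤ a := h2 a (Finset.mem_cons_self a T)
      have ih' := ih (fun p hp => h2 p (Finset.mem_cons_of_mem hp))
      have hT1 : 1 ≤ ∏ p ∈ T, (p-1) := by
        apply Finset.one_le_prod'
        intro p hp
        have := h2 p (Finset.mem_cons_of_mem hp); omega
      have hTp : 1 ≤ ∏ p ∈ T, p := le_trans (by omega) ih'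
      obtain ⟨b, rfl⟩ : ∃ b, a = b + 2 := ⟨a - 2, by omega⟩
      have hmul := Nat.mul_le_mul_left (b+1) ih'
      calc (b + 2 - 1) * ∏ p ∈ T, (p-1) + 1 = (b+1) * (∏ p ∈ T, (p-1)) + 1 := rfl
        _ ≤ (b+1) * ((∏ p ∈ T, (p-1)) + 1) := by nlinarith
        _ ≤ (b+1) * ∏ p ∈ T, p := hmul
        _ ≤ (b+2) * ∏ p ∈ T, p := Nat.mul_le_mul_right _ (by omega)

lemma sumrecip (q : ℕ) (T : Finset ℕ) (hq : ∀ p ∈ T, q ≤ p ∧ 1 ≤ p) :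
    q * ∏ p ∈ T, p ≤ q * (∏ p ∈ T, (p-1)) + T.card * ∏ p ∈ T, p := by
  induction T using Finset.induction with
  | empty => simp
  | insert r T ha ih =>
      have hr := hq r (Finset.mem_insert_self r T)
      obtain ⟨s, hs⟩ : ∃ s, r = s + 1 := ⟨r - 1, by omega⟩
      have ih' := ih (fun p hp => hq p (Finset.mem_insert_of_mem hp))
      rw [Finset.prod_insert ha, Finset.prod_insert ha, Finset.card_insert_of_notMem ha, hs]
      set M := ∏ p ∈ T, p
      set F := ∏ p ∈ T, (p-1)
      set m := T.card
      -- goal : q * ((s+1) * M) ≤ q * ((s+1-1) * F) + (m+1) * ((s+1)*M)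
      have key : q * s * M ≤ q * s * F + s * m * M := by
        have := Nat.mul_le_mul_left s ih'
        calc q * s * M = s * (q * M) := by ring
          _ ≤ s * (q * F + m * M) := Nat.mul_le_mul_left s ih'
          _ = q * s * F + s * m * M := by ring
      have hq1 : q ≤ s + 1 := by omega
      have hM : 0 ≤ M := Nat.zero_le M
      calc q * ((s+1) * M) = q * s * M + q * M := by ring
        _ ≤ (q * s * F + s * m * M) + q * M := by omega
        _ ≤ (q * s * F + s * m * M) + (s+1) * M := by
            have : q * M ≤ (s+1) * M := Nat.mul_le_mul_right M hq1
            omega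
        _ ≤ q * ((s+1-1) * F) + (m+1) * ((s+1)*M) := by
            have e1 : q * ((s+1-1) * F) = q * s * F := by rw [Nat.add_sub_cancel]; ring
            have e2 : (m+1) * ((s+1)*M) = s*m*M + (s+1)*M + m * M := by ring
            omega

section lehmer
variable {N d : ℕ}

lemma claimA (hN : 2 ≤ N) (hd2 : 2 ≤ d) (hsq : Squarefree N)
    (hφ : N.totient = ∏ p ∈ N.primeFactors, (p-1))
    (hd : d * N.totient = N - 1) :
    ∀ S ⊆ N.primeFactors, S ≠ N.primeFactors →
      (∏ p ∈ S, p) + 1 ≤ d * ∏ p ∈ S, (p-1) := by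
  intro S hS hne
  by_contra hcon
  push_neg at hcon
  have hTne : (N.primeFactors \ S).Nonempty := by
    rw [Finset.sdiff_nonempty]
    intro h
    exact hne (Finset.Subset.antisymm hS h)
  have h2T : ∀ p ∈ N.primeFactors \ S, 2 ≤ p := fun p hp =>
    (Nat.prime_of_mem_primeFactors (Finset.mem_sdiff.mp hp).1).two_le
  have hFT := prod_sub_one_le hTne h2T
  have hsplitφ : N.totient = (∏ p ∈ N.primeFactors \ S, (p-1)) * ∏ p ∈ S, (p-1) := by
    rw [hφ, Finset.prod_sdiff hS]
  have hsplitN : (∏ p ∈ N.primeFactors \ S, p) * ∏ p ∈ S, p = N := by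
    rw [Finset.prod_sdiff hS, Nat.prod_primeFactors_of_squarefree hsq]
  set MS := ∏ p ∈ S, p with hMS
  set FS := ∏ p ∈ S, (p-1) with hFS
  set MT := ∏ p ∈ N.primeFactors \ S, p
  set FT := ∏ p ∈ N.primeFactors \ S, (p-1)
  -- from hcon : d * FS ≤ MS
  have hconle : d * FS ≤ MS := by omega
  have key : N - 1 ≤ MS * FT := by
    calc N - 1 = d * (FT * FS) := by rw [← hd, hsplitφ]
      _ = (d * FS) * FT := by ring
      _ ≤ MS * FT := Nat.mul_le_mul_right FT hconle
  have key2 : MS * FT + MS ≤ N := by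
    calc MS * FT + MS = MS * (FT + 1) := by ring
      _ ≤ MS * MT := Nat.mul_le_mul_left MS hFT
      _ = N := by rw [mul_comm]; exact hsplitN
  have hMS2 : 2 ≤ MS ∨ S = ∅ := by
    rcases Finset.eq_empty_or_nonempty S with h | h
    · exact Or.inr h
    · left
      obtain ⟨p, hp⟩ := h
      have hp2 : 2 ≤ p := (Nat.prime_of_mem_primeFactors (hS hp)).two_le
      calc 2 ≤ p := hp2
        _ ≤ MS := Finset.single_le_prod' (fun q hq =>
            (Nat.prime_of_mem_primeFactors (hS hq)).one_lt.le.trans' (by norm_num)) hp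
  rcases hMS2 with h | h
  · -- MS ≥ 2 : contradiction via key, key2
    obtain ⟨X, hX⟩ : ∃ X, MS * FT = X := ⟨_, rfl⟩
    rw [hX] at key key2
    omega
  · -- S empty : MS = 1, FS = 1, d ≤ 1 contradiction
    subst h
    have e1 : MS = 1 := by rw [hMS]; simp
    have e2 : FS = 1 := by rw [hFS]; simp
    rw [e1, e2, mul_one] at hconle
    omega

lemma step_bound (hN : 2 ≤ N) (hd2 : 2 ≤ d) (hsq : Squarefree N)
    (hφ : N.totient = ∏ p ∈ N.primeFactors, (p-1))
    (hd : d * N.totient = N - 1)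
    (S : Finset ℕ) (hS : S ⊆ N.primeFactors)
    (hne : (N.primeFactors \ S).Nonempty) :
    (N.primeFactors \ S).min' hne ≤ (N.primeFactors \ S).card * ((∏ p ∈ S, p) + 1) := by
  classical
  set T := N.primeFactors \ S with hT
  set q := T.min' hne with hqdef
  set m := T.card
  set M := ∏ p ∈ S, p with hM
  set F := ∏ p ∈ S, (p-1) with hF
  set M' := ∏ p ∈ T, p with hM'
  set F' := ∏ p ∈ T, (p-1) with hF'
  have hSneP : S ≠ N.primeFactors := by
    intro h
    have : T = ∅ := by rw [hT, h, Finset.sdiff_self]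
    exact hne.ne_empty this
  have hA : M + 1 ≤ d * F := claimA hN hd2 hsq hφ hd S hS hSneP
  have h1 : q * M' ≤ q * F' + m * M' :=
    sumrecip q T (fun p hp => ⟨Finset.min'_le T p hp,
      (Nat.prime_of_mem_primeFactors (Finset.mem_sdiff.mp hp).1).one_lt.le.trans' (by norm_num)⟩)
  have hsplitφ : N.totient = F' * F := by rw [hφ, hF, hF', hT, Finset.prod_sdiff hS]
  have hsplitN : M' * M = N := by
    rw [hM, hM', hT, Finset.prod_sdiff hS, Nat.prod_primeFactors_of_squarefree hsq]
  have hM'pos : 0 < M' := Finset.prod_pos (fun p hp =>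
    (Nat.prime_of_mem_primeFactors (Finset.mem_sdiff.mp hp).1).pos)
  obtain ⟨n1, hn1⟩ : ∃ n1, N = n1 + 1 := ⟨N - 1, by omega⟩
  have hdn1 : d * (F' * F) = n1 := by rw [← hsplitφ, hd, hn1]; simp
  -- c2 : (M+1) * (q * F') ≤ q * n1
  have c2 : (M+1) * (q * F') ≤ q * n1 := by
    calc (M+1) * (q * F') ≤ (d * F) * (q * F') := Nat.mul_le_mul_right _ hA
      _ = q * (d * (F' * F)) := by ring
      _ = q * n1 := by rw [hdn1]
  -- c3 : (M+1) * (q*M') ≤ (M+1)*(q*F') + (M+1)*(m*M')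
  have c3 : (M+1) * (q * M') ≤ (M+1)*(q * F') + (M+1)*(m * M') := by
    calc (M+1) * (q * M') ≤ (M+1) * (q * F' + m * M') := Nat.mul_le_mul_left _ h1
      _ = (M+1)*(q * F') + (M+1)*(m * M') := by ring
  have c4 : (M+1) * (q * M') = q * N + q * M' := by
    rw [← hsplitN]; ring
  have c5 : q * n1 + q = q * N := by rw [hn1]; ring
  -- combine
  have c6 : q * N + q * M' ≤ q * n1 + (M+1)*(m*M') := by omega
  have c7 : q + q * M' ≤ (M+1)*(m*M') := by omega
  have c8 : q * M' ≤ (m * (M + 1)) * M' := by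
    calc q * M' ≤ q + q * M' := by omega
      _ ≤ (M+1)*(m*M') := c7
      _ = (m * (M + 1)) * M' := by ring
  exact Nat.le_of_mul_le_mul_right c8 hM'pos

lemma chain_aux (hN : 2 ≤ N) (hd2 : 2 ≤ d) (hsq : Squarefree N)
    (hφ : N.totient = ∏ p ∈ N.primeFactors, (p-1))
    (hd : d * N.totient = N - 1) :
    ∀ t : ℕ, ∀ S : Finset ℕ, S ⊆ N.primeFactors → (N.primeFactors \ S).card = t →
      (∏ p ∈ S, p) ≤ (2 * N.primeFactors.card) ^ (2 ^ S.card - 1) →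
      N ≤ (2 * N.primeFactors.card) ^ (2 ^ N.primeFactors.card - 1) := by
  classical
  set K := N.primeFactors.card with hK
  intro t
  induction t with
  | zero =>
      intro S hS hcard hbound
      have : S = N.primeFactors := by
        have h1 : N.primeFactors \ S = ∅ := Finset.card_eq_zero.mp hcard
        have h2 : N.primeFactors ⊆ S := by
          intro x hx
          by_contra hxs
          have : x ∈ N.primeFactors \ S := Finset.mem_sdiff.mpr ⟨hx, hxs⟩
          rw [h1] at this
          exact absurd this (Finset.notMem_empty x)
        exact Finset.Subset.antisymm hS h2
      subst this
      rwa [Nat.prod_primeFactors_of_squarefree hsq] at hbound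
  | succ t ih =>
      intro S hS hcard hbound
      have hne : (N.primeFactors \ S).Nonempty := by
        rw [← Finset.card_pos, hcard]; omega
      set q := (N.primeFactors \ S).min' hne with hq
      have hqmem : q ∈ N.primeFactors \ S := Finset.min'_mem _ hne
      have hqP : q ∈ N.primeFactors := (Finset.mem_sdiff.mp hqmem).1
      have hqS : q ∉ S := (Finset.mem_sdiff.mp hqmem).2
      have hS' : insert q S ⊆ N.primeFactors := by
        intro x hx
        rcases Finset.mem_insert.mp hx with rfl | hx
        · exact hqP
        · exact hS hx
      have hcard' : (N.primeFactors \ insert q S).card = t := by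
        rw [Finset.sdiff_insert]
        rw [Finset.card_erase_of_mem hqmem, hcard]
        omega
      have hqbound : q ≤ (2*K) * ∏ p ∈ S, p := by
        have h1 := step_bound hN hd2 hsq hφ hd S hS hne
        have h2 : (N.primeFactors \ S).card ≤ K := Finset.card_le_card (Finset.sdiff_subset)
        have hM1 : 1 ≤ ∏ p ∈ S, p := Finset.one_le_prod' (fun p hp =>
          (Nat.prime_of_mem_primeFactors (hS hp)).one_lt.le.trans' (by norm_num))
        calc q ≤ (N.primeFactors \ S).card * ((∏ p ∈ S, p) + 1) := h1
          _ ≤ K * ((∏ p ∈ S, p) + 1) := Nat.mul_le_mul_right _ h2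
          _ ≤ K * (2 * ∏ p ∈ S, p) := Nat.mul_le_mul_left _ (by omega)
          _ = (2*K) * ∏ p ∈ S, p := by ring
      have hKpos : 1 ≤ K := Finset.card_pos.mpr ⟨q, hqP⟩
      have hbound' : (∏ p ∈ insert q S, p) ≤ (2*K) ^ (2 ^ (insert q S).card - 1) := by
        rw [Finset.prod_insert hqS, Finset.card_insert_of_notMem hqS]
        have e : 2 ^ (S.card + 1) - 1 = 1 + ((2 ^ S.card - 1) + (2 ^ S.card - 1)) := by
          have h1 : 1 ≤ 2 ^ S.card := Nat.one_le_two_pow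
          have h2 : 2 ^ (S.card + 1) = 2 ^ S.card + 2 ^ S.card := by rw [pow_succ]; ring
          omega
        rw [e, pow_add, pow_add, pow_one]
        calc q * ∏ p ∈ S, p ≤ ((2*K) * ∏ p ∈ S, p) * ∏ p ∈ S, p :=
              Nat.mul_le_mul_right _ hqbound
          _ = (2*K) * ((∏ p ∈ S, p) * ∏ p ∈ S, p) := by ring
          _ ≤ (2*K) * ((2*K) ^ (2 ^ S.card - 1) * (2*K) ^ (2 ^ S.card - 1)) := by
              apply Nat.mul_le_mul_left
              exact Nat.mul_le_mul hbound hbound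
      exact ih (insert q S) hS' hcard' hbound'

lemma lehmer_size_bound (hN : 2 ≤ N) (hd2 : 2 ≤ d) (hsq : Squarefree N)
    (hφ : N.totient = ∏ p ∈ N.primeFactors, (p-1))
    (hd : d * N.totient = N - 1) :
    N ≤ (2 * N.primeFactors.card) ^ (2 ^ N.primeFactors.card - 1) := by
  classical
  apply chain_aux hN hd2 hsq hφ hd (N.primeFactors \ ∅).card ∅ (Finset.empty_subset _) rfl
  simp

end lehmer

lemma prime_mod4 {p a b : ℕ} (hp : p.Prime) (hpodd : p % 2 = 1)
    (hdvd : p ∣ a^2 + b^2) (hna : ¬ p ∣ a) : p % 4 = 1 := by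
  haveI : Fact p.Prime := ⟨hp⟩
  have ha : (a : ZMod p) ≠ 0 := by
    rwa [Ne, ZMod.natCast_eq_zero_iff]
  have h0 : (a : ZMod p)^2 + (b:ZMod p)^2 = 0 := by
    have : ((a^2 + b^2 : ℕ) : ZMod p) = 0 := (ZMod.natCast_eq_zero_iff _ _).mpr hdvd
    push_cast at this
    exact this
  have hsq : IsSquare (-1 : ZMod p) := by
    refine ⟨(b : ZMod p) * (a : ZMod p)⁻¹, ?_⟩
    field_simp
    linear_combination -h0
  have h3 := ZMod.exists_sq_eq_neg_one_iff.mp hsq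
  omega

lemma lehmer_squarefree {N : ℕ} (h1 : 1 < N) (hd : N.totient ∣ N - 1) : Squarefree N := by
  rw [Nat.squarefree_iff_prime_squarefree]
  intro p hp hsq
  obtain ⟨c, hc⟩ := hsq
  have hpd : p ∣ N.totient := by
    have : N = p * (p * c) := by rw [hc]; ring
    rw [this, Nat.totient_mul_of_prime_of_dvd hp (Dvd.intro c rfl)]
    exact Dvd.intro _ rfl
  have h2 : p ∣ N - 1 := hpd.trans hd
  have h3 : p ∣ N := by rw [hc]; exact ⟨p*c, by ring⟩
  have : p ∣ 1 := by
    have := Nat.dvd_sub h3 h2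
    rwa [Nat.sub_sub_self (by omega)] at this
  exact hp.one_lt.ne' (Nat.dvd_one.mp this)

lemma twopow_ge (K : ℕ) (hK : 2 ≤ K) : K + 2 ≤ 2 ^ K := by
  induction K, hK using Nat.le_induction with
  | base => norm_num
  | succ n hn ih =>
      have : 2^(n+1) = 2^n + 2^n := by rw [pow_succ]; ring
      omega

lemma final_arith (K : ℕ) (hK : 2 ≤ K) : (K+1) * 2^K + 2 < 2^(2*K) := by
  have h := twopow_ge K hK
  have h4 : 4 ≤ 2^K := by
    calc 4 ≤ K + 2 := by omega
      _ ≤ 2^K := h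
  have e : 2^(2*K) = 2^K * 2^K := by rw [two_mul, pow_add]
  rw [e]
  have h2 : (K+2) * 2^K ≤ 2^K * 2^K := Nat.mul_le_mul_right _ h
  have h3 : (K+2) * 2^K = (K+1) * 2^K + 2^K := by ring
  omega

theorem no_pell_lehmer :
    ¬ ∃ n : ℕ, 1 < pellP n ∧ ¬ (pellP n).Prime ∧ (pellP n).totient ∣ pellP n - 1 := by
  rintro ⟨n, hgt, hnp, hdvd⟩
  set N := pellP n with hN
  have hsq : Squarefree N := lehmer_squarefree hgt hdvd
  have hN2 : 2 < N := by
    rcases Nat.lt_or_ge N 3 with h | h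
    · have : N = 2 := by omega
      rw [this] at hnp
      exact absurd Nat.prime_two hnp
    · omega
  have hodd : N % 2 = 1 := by
    have heven : 2 ∣ N.totient := (Nat.totient_even hN2).two_dvd
    have h2 : 2 ∣ N - 1 := heven.trans hdvd
    omega
  have hnodd : n % 2 = 1 := by
    have := pellP_parity n
    rw [← hN] at this
    omega
  obtain ⟨k, hk⟩ : ∃ k, n = 2*k+1 := ⟨n/2, by omega⟩
  have hk1 : 1 ≤ k := by
    rcases Nat.eq_zero_or_pos k with h | h
    · subst h
      rw [hk] at hN
      rw [hN] at hgt
      norm_num [pellP] at hgt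
    · exact h
  have hsum : N = pellP k ^2 + pellP (k+1)^2 := by rw [hN, hk]; exact pellP_sq_add_sq k
  have hmod4 : ∀ p ∈ N.primeFactors, p % 4 = 1 := by
    intro p hp
    have hpp := Nat.prime_of_mem_primeFactors hp
    have hpdvd := Nat.dvd_of_mem_primeFactors hp
    have hpodd : p % 2 = 1 := by
      rcases hpp.eq_two_or_odd with h | h
      · exfalso
        subst h
        obtain ⟨e, he⟩ := hpdvd
        omega
      · exact h
    have hna : ¬ p ∣ pellP k := by
      intro hdk
      have h1 : p ∣ pellP k ^ 2 := dvd_pow hdk two_ne_zero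
      have h2 : p ∣ pellP (k+1)^2 := (Nat.dvd_add_right h1).mp (hsum ▸ hpdvd)
      have h3 : p ∣ pellP (k+1) := hpp.dvd_of_dvd_pow h2
      have h4 : p ∣ Nat.gcd (pellP k) (pellP (k+1)) := Nat.dvd_gcd hdk h3
      rw [pellP_coprime k] at h4
      exact hpp.one_lt.ne' (Nat.dvd_one.mp h4)
    exact prime_mod4 hpp hpodd (hsum ▸ hpdvd) hna
  have hNpos : 0 < N := by omega
  have hφprod : N.totient = ∏ p ∈ N.primeFactors, (p-1) := by
    have h := Nat.totient_mul_prod_primeFactors N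
    rw [Nat.prod_primeFactors_of_squarefree hsq, mul_comm N _] at h
    exact Nat.eq_of_mul_eq_mul_right hNpos h
  have hφpos : 0 < N.totient := Nat.totient_pos.mpr hNpos
  have hφlt : N.totient < N - 1 := by
    have hne : N.totient ≠ N - 1 := fun h => hnp ((Nat.totient_eq_iff_prime hNpos).mp h)
    have hle : N.totient ≤ N - 1 := Nat.le_of_dvd (by omega) hdvd
    omega
  set d := (N-1) / N.totient with hddef
  have hdmul : d * N.totient = N - 1 := Nat.div_mul_cancel hdvd
  have hd2 : 2 ≤ d := by
    by_contra h
    push_neg at h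
    have hle : d * N.totient ≤ 1 * N.totient := Nat.mul_le_mul_right _ (by omega)
    rw [one_mul] at hle
    omega
  have hKB := lehmer_size_bound (show 2 ≤ N by omega) hd2 hsq hφprod hdmul
  set K := N.primeFactors.card with hKdef
  have hK1 : 1 ≤ K := Finset.card_pos.mpr (Nat.nonempty_primeFactors.mpr hgt)
  have hK2 : 2 ≤ K := by
    by_contra h
    have hKone : N.primeFactors.card = 1 := by omega
    obtain ⟨p, hp⟩ := Finset.card_eq_one.mp hKone
    have hNp : N = p := by
      have h2 := Nat.prod_primeFactors_of_squarefree hsq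
      rw [hp, Finset.prod_singleton] at h2
      omega
    have hpp : p.Prime := Nat.prime_of_mem_primeFactors
      (by rw [hp]; exact Finset.mem_singleton_self p)
    exact hnp (hNp ▸ hpp)
  have h4K : 2^(2*K) ∣ N - 1 := by
    have h1 : (∏ _p ∈ N.primeFactors, 4) ∣ ∏ p ∈ N.primeFactors, (p-1) :=
      Finset.prod_dvd_prod_of_dvd _ _ (fun p hp => by
        have h2 := hmod4 p hp
        have h3 := (Nat.prime_of_mem_primeFactors hp).one_lt
        exact ⟨(p-1)/4, by omega⟩)
    rw [Finset.prod_const] at h1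
    have he : (4:ℕ)^K = 2^(2*K) := by rw [show (4:ℕ) = 2^2 from rfl, ← pow_mul]
    rw [he] at h1
    exact h1.trans (hφprod ▸ hdvd)
  obtain ⟨A, B, hAB, hA1, hnA⟩ :
      ∃ A B, pellP A * pellQ B + 1 = N ∧ 1 ≤ A ∧ 2*A ≤ n + 1 := by
    rcases Nat.even_or_odd k with ⟨j, hj⟩ | ⟨j, hj⟩
    · refine ⟨2*j, 2*j+1, ?_, by omega, by omega⟩
      rw [hN, hk, show 2*k+1 = 2*(2*j)+1 from by omega]
      exact pell_sub_one_even j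
    · refine ⟨2*j+2, 2*j+1, ?_, by omega, by omega⟩
      rw [hN, hk, show 2*k+1 = 2*(2*j+1)+1 from by omega]
      exact pell_sub_one_odd j
  obtain ⟨c, hc, hcodd⟩ := pellQ_two_mul_odd B
  have hNm1 : N - 1 = pellP A * pellQ B := by omega
  have hAdvd : 2^(2*K-1) ∣ pellP A := by
    have h1 : 2^(2*K) ∣ pellP A * (2 * c) := by
      rw [← hc, ← hNm1]
      exact h4K
    have h2 : 2^(2*K) = 2 * 2^(2*K-1) := by
      rw [← pow_succ']
      congr 1
      omega
    rw [h2] at h1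
    obtain ⟨e, he⟩ := h1
    have h3 : 2^(2*K-1) ∣ pellP A * c := by
      refine ⟨e, Nat.eq_of_mul_eq_mul_left (show 0 < 2 by norm_num) ?_⟩
      calc 2 * (pellP A * c) = pellP A * (2 * c) := by ring
        _ = 2 * 2^(2*K-1) * e := he
        _ = 2 * (2^(2*K-1) * e) := by ring
    have hcop : Nat.Coprime (2^(2*K-1)) c :=
      Nat.Coprime.pow_left _ ((Nat.Prime.coprime_iff_not_dvd Nat.prime_two).mpr (by omega))
    exact hcop.dvd_of_dvd_mul_right h3
  have hAdvdA : 2^(2*K-1) ∣ A := pow_two_dvd_pell _ A (by omega) hAdvd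
  have hAge : 2^(2*K-1) ≤ A := Nat.le_of_dvd (by omega) hAdvdA
  have hnge : 2^(2*K) - 1 ≤ n := by
    have e : 2^(2*K) = 2 * 2^(2*K-1) := by
      rw [← pow_succ']
      congr 1
      omega
    omega
  have hgrow : 2^(n-1) ≤ N := by
    have h := pellP_growth (n-1)
    rw [show n - 1 + 1 = n from by omega] at h
    rw [hN]
    exact h
  have hupper : N ≤ 2^((K+1) * 2^K) := by
    calc N ≤ (2*K)^(2^K - 1) := hKB
      _ ≤ (2^(K+1))^(2^K - 1) := Nat.pow_le_pow_left
          (by have := @Nat.lt_two_pow_self K; rw [pow_succ]; omega) _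
      _ = 2^((K+1) * (2^K - 1)) := by rw [← pow_mul]
      _ ≤ 2^((K+1) * 2^K) := Nat.pow_le_pow_right (by norm_num)
          (Nat.mul_le_mul_left (K+1) (Nat.sub_le _ _))
  have hexp : n - 1 ≤ (K+1) * 2^K :=
    (Nat.pow_le_pow_iff_right (by norm_num : 1 < 2)).mp (le_trans hgrow hupper)
  have harith := final_arith K hK2
  obtain ⟨x, hx⟩ : ∃ x, 2^(2*K) = x := ⟨_, rfl⟩
  obtain ⟨y, hy⟩ : ∃ y, (K+1) * 2^K = y := ⟨_, rfl⟩
  rw [hx] at hnge harith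
  rw [hy] at hexp harith
  omega
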